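/- Let f be a polynomial in r variables with nonnegative integer coefficients and nonzero constant term, and let b > 1 be a natural number. Writing v_b(n) for the b-adic valuation of n (the number of times b divides n), for all nonnegative integers k₁, …, k_r one has v_b(f(b^{k₁}, …, b^{k_r})) ≤ (Σ over nonzero coefficients a of f of (⌊log_b a⌋ + 1)) − 1. -/

import Mathlib

private def Nsum (b : ℕ) (L : List (ℕ × ℕ)) : ℕ := (L.map fun p => p.1 * b ^ p.2).sum
private def Dsum (b : ℕ) (L : List (ℕ × ℕ)) : ℕ := (L.map fun p => Nat.log b p.1 + 1).sum

private lemma sum_succ_le_pow {b : ℕ} (hb : 1 < b) :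
    ∀ L : List ℕ, L.sum + 1 ≤ b ^ (L.map fun a => Nat.log b a + 1).sum := by
  intro L
  induction L with
  | nil => simp
  | cons a L ih =>
    have ha : a + 1 ≤ b ^ (Nat.log b a + 1) := Nat.lt_pow_succ_log_self hb a
    have hx : 1 ≤ b ^ (Nat.log b a + 1) := Nat.one_le_pow _ _ (by omega)
    have hy : 1 ≤ b ^ ((L.map fun a => Nat.log b a + 1)).sum := Nat.one_le_pow _ _ (by omega)
    simp only [List.map_cons, List.sum_cons]
    rw [pow_add]
    nlinarith [ih]

private lemma nsum_split (b : ℕ) (hb : 1 < b) : ∀ L : List (ℕ × ℕ),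
    Nsum b L = ((L.filter fun p => p.2 = 0).map Prod.fst).sum
      + b * Nsum b ((L.filter fun p => p.2 ≠ 0).map fun p => (p.1, p.2 - 1)) := by
  intro L
  induction L with
  | nil => simp [Nsum]
  | cons p L ih =>
    by_cases hp : p.2 = 0
    · simp only [Nsum, List.map_cons, List.sum_cons, List.filter_cons, hp] at *
      simp [hp, ih, Nsum]
      ring
    · obtain ⟨n, hn⟩ := Nat.exists_eq_succ_of_ne_zero hp
      simp only [Nsum, List.map_cons, List.sum_cons, List.filter_cons, hp] at *
      simp [hp, ih, Nsum, hn, pow_succ]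
      ring

private lemma dsum_split (b : ℕ) : ∀ L : List (ℕ × ℕ),
    Dsum b L = ((L.filter fun p => p.2 = 0).map fun p => Nat.log b p.1 + 1).sum
      + Dsum b ((L.filter fun p => p.2 ≠ 0).map fun p => (p.1, p.2 - 1)) := by
  intro L
  induction L with
  | nil => simp [Dsum]
  | cons p L ih =>
    by_cases hp : p.2 = 0
    · rw [List.filter_cons_of_pos (by simpa using hp), List.filter_cons_of_neg (by simpa using hp)]
      simp only [Dsum, List.map_cons, List.sum_cons] at ih ⊢
      omega
    · rw [List.filter_cons_of_neg (by simpa using hp), List.filter_cons_of_pos (by simpa using hp)]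
      simp only [Dsum, List.map_cons, List.map_map, List.sum_cons, Function.comp_apply] at ih ⊢
      omega

private lemma key {b : ℕ} (hb : 1 < b) :
    ∀ v : ℕ, ∀ L : List (ℕ × ℕ), (∀ p ∈ L, 0 < p.1) → (∃ p ∈ L, p.2 = 0) →
      b ^ v ∣ Nsum b L → v + 1 ≤ Dsum b L := by
  intro v
  induction v with
  | zero =>
    rintro L hpos ⟨p, hp, -⟩ -
    have : Nat.log b p.1 + 1 ≤ Dsum b L := by
      apply List.single_le_sum (by simp) _ (List.mem_map_of_mem hp)
    omega
  | succ v ih =>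
    intro L hpos hzero hdvd
    set L₀ := L.filter fun p => p.2 = 0 with hL₀
    set L₁ := (L.filter fun p => p.2 ≠ 0).map fun p => (p.1, p.2 - 1) with hL₁
    set S₀ := (L₀.map Prod.fst).sum with hS₀
    have hsplit : Nsum b L = S₀ + b * Nsum b L₁ := nsum_split b hb L
    have hbdvdN : b ∣ Nsum b L := dvd_trans (dvd_pow_self b (Nat.succ_ne_zero v)) hdvd
    have hbS₀ : b ∣ S₀ := by
      have : b ∣ S₀ + b * Nsum b L₁ := hsplit ▸ hbdvdN
      exact (Nat.dvd_add_right (Dvd.intro _ rfl)).mp (by rwa [add_comm] at this)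
    obtain ⟨p, hp, hp2⟩ := hzero
    have hpL₀ : p ∈ L₀ := List.mem_filter.mpr ⟨hp, by simp [hp2]⟩
    have hS₀pos : 0 < S₀ := by
      have := List.single_le_sum (l := L₀.map Prod.fst) (by simp) p.1
        (List.mem_map_of_mem hpL₀)
      have := hpos p hp
      omega
    have hbleS₀ : b ≤ S₀ := Nat.le_of_dvd hS₀pos hbS₀
    -- the new list
    set L' := (S₀ / b, 0) :: L₁ with hL'
    have hNL' : Nsum b L' = S₀ / b + Nsum b L₁ := by simp [Nsum, hL']
    have hdvd' : b ^ v ∣ Nsum b L' := by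
      have h1 : Nsum b L = b * Nsum b L' := by
        rw [hsplit, hNL', Nat.mul_add, Nat.mul_div_cancel' hbS₀]
      have h2 : b ^ (v + 1) ∣ b * Nsum b L' := h1 ▸ hdvd
      rw [pow_succ, mul_comm (b ^ v) b] at h2
      exact (Nat.mul_dvd_mul_iff_left (by omega : 0 < b)).mp h2
    have hpos' : ∀ q ∈ L', 0 < q.1 := by
      intro q hq
      rcases List.mem_cons.mp hq with h | h
      · subst h; exact Nat.div_pos hbleS₀ (by omega)
      · obtain ⟨q', hq', rfl⟩ := List.mem_map.mp h
        exact hpos q' (List.mem_of_mem_filter hq')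
    have hzero' : ∃ q ∈ L', q.2 = 0 := ⟨(S₀ / b, 0), List.mem_cons_self, rfl⟩
    have hih := ih L' hpos' hzero' hdvd'
    -- estimate Dsum L'
    have hlogS₀ : Nat.log b S₀ + 1 ≤ (L₀.map fun p => Nat.log b p.1 + 1).sum := by
      have h1 : S₀ + 1 ≤ b ^ ((L₀.map Prod.fst).map fun a => Nat.log b a + 1).sum :=
        sum_succ_le_pow hb _
      rw [List.map_map] at h1
      have h2 : Nat.log b S₀ < ((L₀.map fun p => Nat.log b p.1 + 1)).sum := by
        apply Nat.log_lt_of_lt_pow (by omega)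
        calc S₀ < S₀ + 1 := Nat.lt_succ_self _
        _ ≤ _ := h1
      exact h2
    have hlogdiv : Nat.log b (S₀ / b) + 1 = Nat.log b S₀ := by
      rw [Nat.log_div_base]
      have := Nat.log_pos hb hbleS₀
      omega
    have hDL' : Dsum b L' = Nat.log b S₀ + Dsum b L₁ := by
      simp only [Dsum, hL', List.map_cons, List.sum_cons]
      omega
    have hDL : Dsum b L = (L₀.map fun p => Nat.log b p.1 + 1).sum + Dsum b L₁ :=
      dsum_split b L
    omega

theorem valuation_of_poly_at_powers (r : ℕ) (f : MvPolynomial (Fin r) ℕ)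
    (hconst : MvPolynomial.coeff 0 f ≠ 0) (b : ℕ) (hb : 1 < b) (k : Fin r → ℕ) :
    padicValNat b (MvPolynomial.eval (fun i => b ^ k i) f) ≤
      (∑ m ∈ f.support, (Nat.log b (MvPolynomial.coeff m f) + 1)) - 1 := by
  classical
  set L : List (ℕ × ℕ) :=
    f.support.toList.map fun m => (MvPolynomial.coeff m f, ∑ i, k i * m i) with hL
  have hNL : Nsum b L = MvPolynomial.eval (fun i => b ^ k i) f := by
    rw [MvPolynomial.eval_eq']
    rw [← Finset.sum_map_toList]
    simp only [Nsum, hL, List.map_map]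
    congr 1
    apply List.map_congr_left
    intro m hm
    simp only [Function.comp_apply]
    congr 1
    rw [← Finset.prod_pow_eq_pow_sum]
    exact Finset.prod_congr rfl fun i _ => by rw [← pow_mul]

  have hDL : Dsum b L = ∑ m ∈ f.support, (Nat.log b (MvPolynomial.coeff m f) + 1) := by
    rw [← Finset.sum_map_toList]
    simp [Dsum, hL, List.map_map, Function.comp]
  have hpos : ∀ p ∈ L, 0 < p.1 := by
    intro p hp
    obtain ⟨m, hm, rfl⟩ := List.mem_map.mp hp
    have := MvPolynomial.mem_support_iff.mp (Finset.mem_toList.mp hm)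
    omega
  have hzero : ∃ p ∈ L, p.2 = 0 := by
    refine ⟨(MvPolynomial.coeff 0 f, ∑ i, k i * (0 : Fin r →₀ ℕ) i), ?_, by simp⟩
    exact List.mem_map_of_mem (Finset.mem_toList.mpr (MvPolynomial.mem_support_iff.mpr hconst))
  have hdvd : b ^ padicValNat b (Nsum b L) ∣ Nsum b L := pow_padicValNat_dvd
  have := key hb (padicValNat b (Nsum b L)) L hpos hzero hdvd
  rw [hNL, hDL] at this
  omega
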